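/- The homomorphism β : N^F → N_F induced by the identity of N (inclusion of invariants followed by projection onto coinvariants) has finite kernel and finite cokernel. -/

import Mathlib

open Module

/-- The endomorphism `F - 1` of `N`. -/
def frobSub {N : Type*} [AddCommGroup N] (F : AddAut N) : N →+ N :=
  AddEquiv.toAddMonoidHom (F : N ≃+ N) - AddMonoidHom.id N

/-- The invariants `N^F = ker (F - 1)`. -/
def invariantsOf {N : Type*} [AddCommGroup N] (F : AddAut N) : AddSubgroup N :=
  (frobSub F).ker

/-- The coinvariants `N_F = N / im (F - 1)`. -/
abbrev coinvariantsOf {N : Type*} [AddCommGroup N] (F : AddAut N) :=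
  N ⧸ (frobSub F).range

/-- The map `β : N^F → N_F` induced by the identity of `N`. -/
def betaHom {N : Type*} [AddCommGroup N] (F : AddAut N) :
    ↥(invariantsOf F) →+ coinvariantsOf F :=
  (QuotientAddGroup.mk' (frobSub F).range).comp (invariantsOf F).subtype

/-- The cokernel of `β`. -/
abbrev betaCoker {N : Type*} [AddCommGroup N] (F : AddAut N) :=
  coinvariantsOf F ⧸ (betaHom F).range

/-- `ω = |coker β| / |ker β|`. -/
noncomputable def omegaOf {N : Type*} [AddCommGroup N] (F : AddAut N) : ℕ :=
  Nat.card (betaCoker F) / Nat.card ↥(betaHom F).ker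

/-- `τ = rank N - rank N^F`. -/
noncomputable def tauOf {N : Type*} [AddCommGroup N] (F : AddAut N) : ℕ :=
  Module.finrank ℤ N - Module.finrank ℤ ↥(invariantsOf F)

section Aux

theorem my_fg_sub {G : Type*} [AddCommGroup G] [AddGroup.FG G] (S : AddSubgroup G) :
    AddGroup.FG ↥S := by
  have h1 : Module.Finite ℤ G := Module.Finite.iff_addGroup_fg.mpr ‹_›
  have h2 : IsNoetherian ℤ G := inferInstance
  have h3 : Module.Finite ℤ ↥(AddSubgroup.toIntSubmodule S) :=
    Module.Finite.iff_fg.mpr (IsNoetherian.noetherian _)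
  exact Module.Finite.iff_addGroup_fg.mp h3

theorem my_finite_of_exp {G : Type*} [AddCommGroup G] [AddGroup.FG G] {n : ℕ} (hn : 0 < n)
    (h : ∀ x : G, n • x = 0) : Finite G :=
  AddCommGroup.finite_of_fg_torsion G
    (fun x => (isOfFinAddOrder_iff_nsmul_eq_zero).mpr ⟨n, hn, h x⟩)

variable {N : Type*} [AddCommGroup N] (F : AddAut N) (n : ℕ)

/-- The norm (trace) map `T = 1 + F + ... + F^(n-1)`. -/
def traceOf : N →+ N :=
  ∑ i ∈ Finset.range n, AddEquiv.toAddMonoidHom ((i • F : AddAut N) : N ≃+ N)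

lemma traceOf_apply (x : N) : traceOf F n x = ∑ i ∈ Finset.range n, (i • F) x := by
  simp [traceOf]

lemma frobSub_apply (x : N) : frobSub F x = F x - x := rfl

lemma pow_succ_apply (i : ℕ) (x : N) : ((i + 1) • F) x = F ((i • F) x) := by
  rw [succ_nsmul']; rfl

lemma trace_frobSub (hFn : n • F = 0) (y : N) : traceOf F n (frobSub F y) = 0 := by
  rw [traceOf_apply, frobSub_apply]
  have h : ∀ i, (i • F) (F y - y) = ((i + 1) • F) y - (i • F) y := by
    intro i
    rw [map_sub, succ_nsmul]
    rfl
  simp only [h]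
  rw [Finset.sum_range_sub (fun i => (i • F) y), hFn]
  simp

lemma frobSub_trace (hFn : n • F = 0) (x : N) : frobSub F (traceOf F n x) = 0 := by
  rw [frobSub_apply, traceOf_apply, map_sum]
  have h : ∀ i, F ((i • F) x) = ((i + 1) • F) x := fun i => (pow_succ_apply F i x).symm
  simp only [h]
  rw [← Finset.sum_sub_distrib, Finset.sum_range_sub (fun i => (i • F) x), hFn]
  simp

lemma trace_of_invariant (x : N) (hx : x ∈ invariantsOf F) : traceOf F n x = n • x := by
  have hfix : ∀ i : ℕ, (i • F) x = x := by
    intro i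
    induction i with
    | zero => rfl
    | succ k ih =>
        rw [pow_succ_apply, ih]
        have : frobSub F x = 0 := hx
        rw [frobSub_apply] at this
        linear_combination (norm := abel) this
  rw [traceOf_apply]
  simp [hfix, Finset.sum_const]

lemma pow_sub_one_mem (x : N) (i : ℕ) : (i • F) x - x ∈ (frobSub F).range := by
  induction i with
  | zero => simpa using (frobSub F).range.zero_mem
  | succ k ih =>
      have h1 : ((k + 1) • F) x - x = frobSub F ((k • F) x) + ((k • F) x - x) := by
        rw [frobSub_apply, pow_succ_apply]; abel
      rw [h1]
      exact AddSubgroup.add_mem _ ⟨_, rfl⟩ ih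

lemma trace_sub_nsmul_mem (x : N) : traceOf F n x - n • x ∈ (frobSub F).range := by
  rw [traceOf_apply]
  have h : (∑ i ∈ Finset.range n, (i • F) x) - n • x
      = ∑ i ∈ Finset.range n, ((i • F) x - x) := by
    rw [Finset.sum_sub_distrib, Finset.sum_const, Finset.card_range]
  rw [h]
  exact AddSubgroup.sum_mem _ fun i _ => pow_sub_one_mem F x i

end Aux

/-- For a finitely generated abelian group `N` and an automorphism `F` of
finite order, the map `β : N^F → N_F` induced by the identity has finite kernel and
finite cokernel. -/
theorem beta_finite_kernel_and_cokernel {N : Type*} [AddCommGroup N] [AddGroup.FG N]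
    (F : AddAut N) (n : ℕ) (hn : 1 ≤ n) (hFn : n • F = 0) :
    Finite ↥(betaHom F).ker ∧ Finite (betaCoker F) := by
  constructor
  · haveI : AddGroup.FG ↥(invariantsOf F) := my_fg_sub _
    haveI : AddGroup.FG ↥(betaHom F).ker := my_fg_sub _
    refine my_finite_of_exp hn ?_
    rintro ⟨⟨x, hxinv⟩, hxker⟩
    have hx : x ∈ (frobSub F).range := by
      have := hxker
      simp only [betaHom, AddMonoidHom.mem_ker, AddMonoidHom.comp_apply,
        AddSubgroup.coe_subtype] at this
      exact (QuotientAddGroup.eq_zero_iff x).mp this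
    obtain ⟨y, hy⟩ := hx
    have h0 : n • x = 0 := by
      rw [← trace_of_invariant F n x hxinv, ← hy, trace_frobSub F n hFn]
    ext
    simpa using h0
  · haveI : AddGroup.FG (betaCoker F) := by
      have h1 : AddGroup.FG (coinvariantsOf F) :=
        AddGroup.fg_of_surjective (QuotientAddGroup.mk'_surjective (frobSub F).range)
      exact AddGroup.fg_of_surjective (QuotientAddGroup.mk'_surjective (betaHom F).range)
    refine my_finite_of_exp hn ?_
    intro z
    obtain ⟨w, rfl⟩ := QuotientAddGroup.mk'_surjective (betaHom F).range z
    obtain ⟨x, rfl⟩ := QuotientAddGroup.mk'_surjective (frobSub F).range w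
    have hTinv : traceOf F n x ∈ invariantsOf F := frobSub_trace F n hFn x
    rw [← map_nsmul, ← map_nsmul]
    have hmk : (QuotientAddGroup.mk' (frobSub F).range) (n • x)
        = betaHom F ⟨traceOf F n x, hTinv⟩ := by
      simp only [betaHom, AddMonoidHom.comp_apply, AddSubgroup.coe_subtype]
      rw [eq_comm, QuotientAddGroup.mk'_eq_mk']
      exact ⟨-(traceOf F n x - n • x), (frobSub F).range.neg_mem (trace_sub_nsmul_mem F n x),
        by abel⟩
    rw [hmk, QuotientAddGroup.mk'_apply, QuotientAddGroup.eq_zero_iff]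
    exact ⟨_, rfl⟩
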